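/- arXiv:1808.09963 — 4 statements merged into one kernel-verified Lean document; each statement's English description precedes it below -/
import Mathlib

section
/- For all integers k ≥ 1 and n ≥ 2, there exists a Gallai k-coloring of the complete graph on n·2^k vertices that contains no monochromatic cycle on 2n+1 vertices; consequently GR_k(C_{2n+1}) ≥ n·2^k + 1. -/
section helpersmarker

private lemma testBit_log2 {y : ℕ} (hy : y ≠ 0) : y.testBit y.log2 = true := by
  have h1 : 2 ^ y.log2 ≤ y := Nat.log2_self_le hy
  have h2 : y < 2 ^ (y.log2 + 1) := Nat.lt_log2_self
  rw [Nat.testBit_eq_decide_div_mod_eq]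
  have : y / 2 ^ y.log2 = 1 := by
    refine Nat.div_eq_of_lt_le (by omega) ?_
    rw [pow_succ] at h2
    omega
  simp [this]

private lemma two_pow_le_of_testBit {z i : ℕ} (h : z.testBit i = true) : 2 ^ i ≤ z := by
  by_contra hc
  rw [Nat.testBit_eq_false_of_lt (by omega)] at h
  simp at h

private lemma log2_xor {x y : ℕ} (hx : x ≠ 0) (h : x.log2 < y.log2) :
    (x ^^^ y).log2 = y.log2 := by
  have hy : y ≠ 0 := by
    rintro rfl
    rw [Nat.log2_zero] at h
    omega
  have hxL : x < 2 ^ y.log2 := (Nat.log2_lt hx).mp h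
  have hbit : (x ^^^ y).testBit y.log2 = true := by
    rw [Nat.testBit_xor, Nat.testBit_eq_false_of_lt hxL, testBit_log2 hy]
    rfl
  have hge : 2 ^ y.log2 ≤ x ^^^ y := two_pow_le_of_testBit hbit
  have hz : x ^^^ y ≠ 0 := by
    intro h0
    rw [h0] at hbit
    simp [Nat.zero_testBit] at hbit
  have hlt : x ^^^ y < 2 ^ (y.log2 + 1) := by
    have hx2 : x < 2 ^ (y.log2 + 1) := lt_of_lt_of_le hxL (Nat.pow_le_pow_right (by norm_num) (Nat.le_succ _))
    have hy2 : y < 2 ^ (y.log2 + 1) := Nat.lt_log2_self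
    exact Nat.xor_lt_two_pow hx2 hy2
  have h1 : (x ^^^ y).log2 < y.log2 + 1 := (Nat.log2_lt hz).mpr hlt
  have h2 : y.log2 ≤ (x ^^^ y).log2 := (Nat.le_log2 hz).mpr hge
  omega

private lemma nat_xor_eq_zero_mp {a b : ℕ} (h : a ^^^ b = 0) : a = b := by
  apply Nat.eq_of_testBit_eq
  intro i
  have := congrArg (fun x => Nat.testBit x i) h
  simp only [Nat.testBit_xor, Nat.zero_testBit] at this
  cases ha : a.testBit i <;> cases hb : b.testBit i <;> simp_all

private lemma cval_block_halves {a b : ℕ} (hab : a ≠ b) (h : (a ^^^ b).log2 = 0) :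
    a / 2 = b / 2 := by
  have hx : a ^^^ b ≠ 0 := by
    intro h0; exact hab (nat_xor_eq_zero_mp h0)
  have h1 : a ^^^ b < 2 := by
    have := (Nat.log2_lt hx).mp (by omega : (a ^^^ b).log2 < 1)
    simpa using this
  have hone : a ^^^ b = 1 := by omega
  have : ∀ j : ℕ, (a / 2).testBit j = (b / 2).testBit j := by
    intro j
    have h2 : (a ^^^ b).testBit (j + 1) = false := by
      rw [hone]
      exact Nat.testBit_eq_false_of_lt (Nat.one_lt_two_pow (Nat.succ_ne_zero j))
    rw [Nat.testBit_xor] at h2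
    rw [Nat.testBit_div_two, Nat.testBit_div_two]
    cases ha : a.testBit (j+1) <;> cases hb : b.testBit (j+1) <;> simp_all
  exact Nat.eq_of_testBit_eq this

end helpersmarker

/-- A symmetric edge-coloring of a complete graph: `c u v` is the color of edge `{u,v}`. -/
def IsSymmColoring {V C : Type*} (c : V → V → C) : Prop :=
  ∀ u v : V, c u v = c v u

/-- The coloring contains a rainbow triangle: three distinct vertices whose three
connecting edges receive three pairwise distinct colors. -/
def HasRainbowTriangle {V C : Type*} (c : V → V → C) : Prop :=
  ∃ u v w : V, u ≠ v ∧ u ≠ w ∧ v ≠ w ∧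
    c u v ≠ c u w ∧ c u v ≠ c v w ∧ c u w ≠ c v w

/-- The coloring contains a cycle on `m` distinct vertices all of whose edges
receive the color `b`. -/
def HasMonoCycleColor {V C : Type*} (c : V → V → C) (m : ℕ) (b : C) : Prop :=
  ∃ f : ZMod m → V, Function.Injective f ∧ ∀ i : ZMod m, c (f i) (f (i + 1)) = b

/-- The coloring contains a monochromatic cycle on `m` distinct vertices. -/
def HasMonoCycle {V C : Type*} (c : V → V → C) (m : ℕ) : Prop :=
  ∃ b : C, HasMonoCycleColor c m b

/-- For all integers `k ≥ 1` and `n ≥ 2`, there exists a Gallai `k`-coloring of the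
complete graph on `n·2^k` vertices containing no monochromatic cycle on `2n+1`
vertices; consequently `GR_k(C_{2n+1}) ≥ n·2^k + 1`. -/
theorem gallai_ramsey_odd_cycle_lower_bound (k n : ℕ) (hk : 1 ≤ k) (hn : 2 ≤ n) :
    ∃ c : Fin (n * 2 ^ k) → Fin (n * 2 ^ k) → Fin k,
      IsSymmColoring c ∧ ¬ HasRainbowTriangle c ∧ ¬ HasMonoCycle c (2 * n + 1) := by
  have hn0 : 0 < n := by omega
  have hblk : ∀ v : Fin (n * 2 ^ k), v.val / n < 2 ^ k := by
    intro v
    rw [Nat.div_lt_iff_lt_mul hn0]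
    calc v.val < n * 2 ^ k := v.isLt
    _ = 2 ^ k * n := by ring
  have hcv : ∀ u v : Fin (n * 2 ^ k),
      (if u.val / n = v.val / n then 0 else ((u.val / n) ^^^ (v.val / n)).log2) < k := by
    intro u v
    split
    · omega
    · next h =>
      have hx : (u.val / n) ^^^ (v.val / n) ≠ 0 := fun h0 => h (nat_xor_eq_zero_mp h0)
      rw [Nat.log2_lt hx]
      exact Nat.xor_lt_two_pow (hblk u) (hblk v)
  refine ⟨fun u v => ⟨_, hcv u v⟩, ?_, ?_, ?_⟩
  · -- symmetric
    intro u v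
    apply Fin.ext
    show (if u.val / n = v.val / n then 0 else ((u.val / n) ^^^ (v.val / n)).log2)
       = (if v.val / n = u.val / n then 0 else ((v.val / n) ^^^ (u.val / n)).log2)
    by_cases h : u.val / n = v.val / n
    · rw [if_pos h, if_pos h.symm]
    · rw [if_neg h, if_neg (Ne.symm h), Nat.xor_comm]
  · -- no rainbow triangle
    rintro ⟨u, v, w, huv, huw, hvw, h1, h2, h3⟩
    set a := u.val / n with ha
    set b := v.val / n with hb
    set c := w.val / n with hc
    have h1' : (if a = b then 0 else (a ^^^ b).log2) ≠ (if a = c then 0 else (a ^^^ c).log2) :=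
      fun he => h1 (Fin.ext he)
    have h2' : (if a = b then 0 else (a ^^^ b).log2) ≠ (if b = c then 0 else (b ^^^ c).log2) :=
      fun he => h2 (Fin.ext he)
    have h3' : (if a = c then 0 else (a ^^^ c).log2) ≠ (if b = c then 0 else (b ^^^ c).log2) :=
      fun he => h3 (Fin.ext he)
    by_cases hab : a = b
    · exact h3' (by rw [hab])
    by_cases hac : a = c
    · refine h2' ?_
      rw [if_neg hab, if_neg (fun hbc => hab (hac.trans hbc.symm)), hac, Nat.xor_comm]
    by_cases hbc : b = c
    · exact h1' (by rw [hbc])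
    rw [if_neg hab, if_neg hac] at h1'
    rw [if_neg hab, if_neg hbc] at h2'
    rw [if_neg hac, if_neg hbc] at h3'
    have hx : a ^^^ b ≠ 0 := fun h0 => hab (nat_xor_eq_zero_mp h0)
    have hy : b ^^^ c ≠ 0 := fun h0 => hbc (nat_xor_eq_zero_mp h0)
    have hz : a ^^^ c = (a ^^^ b) ^^^ (b ^^^ c) := by
      rw [Nat.xor_assoc, ← Nat.xor_assoc b b c, Nat.xor_self, Nat.zero_xor]
    rcases lt_trichotomy (a ^^^ b).log2 (b ^^^ c).log2 with hlt | heq | hgt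
    · exact h3' (by rw [hz, log2_xor hx hlt])
    · exact h2' heq
    · refine h1' ?_
      rw [hz, Nat.xor_comm (a ^^^ b), log2_xor hy hgt]
  · -- no monochromatic (2n+1)-cycle
    rintro ⟨b, f, hinj, hcyc⟩
    haveI : NeZero (2 * n + 1) := ⟨by omega⟩
    have hval : ∀ i : ZMod (2 * n + 1),
        (if (f i).val / n = (f (i + 1)).val / n then 0
          else (((f i).val / n) ^^^ ((f (i + 1)).val / n)).log2) = b.val :=
      fun i => congrArg Fin.val (hcyc i)
    by_cases hb0 : b.val = 0
    · -- color 0: count argument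
      have hstep : ∀ i : ZMod (2 * n + 1),
          (f i).val / n / 2 = (f (i + 1)).val / n / 2 := by
        intro i
        have := hval i
        rw [hb0] at this
        by_cases hA : (f i).val / n = (f (i + 1)).val / n
        · rw [hA]
        · rw [if_neg hA] at this
          exact cval_block_halves hA this
      have hconst : ∀ j : ℕ,
          (f ((j : ZMod (2 * n + 1)))).val / n / 2 = (f 0).val / n / 2 := by
        intro j
        induction j with
        | zero => norm_num
        | succ j ih =>
          have := hstep (j : ZMod (2 * n + 1))
          push_cast
          rw [← this]
          exact ih
      have hdd : ∀ v : ℕ, v / (2 * n) = v / n / 2 := by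
        intro v
        rw [Nat.div_div_eq_div_mul, mul_comm n 2]
      have hall : ∀ i : ZMod (2 * n + 1),
          (f i).val / (2 * n) = (f 0).val / (2 * n) := by
        intro i
        have h1 := hconst i.val
        rw [ZMod.natCast_val, ZMod.cast_id] at h1
        rw [hdd, hdd, h1]
      have h2n : 0 < 2 * n := by omega
      have Finj : Function.Injective
          (fun i : ZMod (2 * n + 1) =>
            (⟨(f i).val % (2 * n), Nat.mod_lt _ h2n⟩ : Fin (2 * n))) := by
        intro i j hij
        simp only [Fin.mk.injEq] at hij
        apply hinj
        apply Fin.ext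
        calc (f i).val = 2 * n * ((f i).val / (2 * n)) + (f i).val % (2 * n) :=
              (Nat.div_add_mod _ _).symm
          _ = 2 * n * ((f j).val / (2 * n)) + (f j).val % (2 * n) := by
              rw [hall i, hall j, hij]
          _ = (f j).val := Nat.div_add_mod _ _
      have hcard := Fintype.card_le_of_injective _ Finj
      rw [ZMod.card, Fintype.card_fin] at hcard
      omega
    · -- positive color: parity argument
      have hstep : ∀ i : ZMod (2 * n + 1),
          ((f i).val / n).testBit b.val ≠ ((f (i + 1)).val / n).testBit b.val := by
        intro i
        have hv := hval i
        by_cases hA : (f i).val / n = (f (i + 1)).val / n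
        · rw [if_pos hA] at hv
          exact absurd hv.symm hb0
        · rw [if_neg hA] at hv
          have hx : ((f i).val / n) ^^^ ((f (i + 1)).val / n) ≠ 0 :=
            fun h0 => hA (nat_xor_eq_zero_mp h0)
          have hbit := testBit_log2 hx
          rw [hv, Nat.testBit_xor] at hbit
          intro hcontra
          rw [hcontra] at hbit
          simp at hbit
      set g : ZMod (2 * n + 1) → ZMod 2 :=
        fun i => if ((f i).val / n).testBit b.val then 1 else 0 with hg
      have hedge : ∀ i : ZMod (2 * n + 1), g i + g (i + 1) = 1 := by
        intro i
        have := hstep i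
        simp only [hg]
        cases h1 : ((f i).val / n).testBit b.val <;>
          cases h2 : ((f (i + 1)).val / n).testBit b.val <;> simp_all
      have e1 : ∑ i : ZMod (2 * n + 1), g (i + 1) = ∑ i : ZMod (2 * n + 1), g i :=
        (Fintype.sum_equiv (Equiv.addRight (1 : ZMod (2 * n + 1)))
          (fun i => g (i + 1)) g (fun i => rfl)).symm ▸ rfl
      have e2 : ∑ i : ZMod (2 * n + 1), (g i + g (i + 1)) = 0 := by
        rw [Finset.sum_add_distrib, e1]
        have : ∀ x : ZMod 2, x + x = 0 := by decide
        exact this _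
      have e3 : ∑ i : ZMod (2 * n + 1), (g i + g (i + 1)) = ((2 * n + 1 : ℕ) : ZMod 2) := by
        rw [Finset.sum_congr rfl (fun i _ => hedge i), Finset.sum_const, Finset.card_univ,
          ZMod.card, nsmul_eq_mul, mul_one]
      rw [e2] at e3
      have := (ZMod.natCast_eq_zero_iff (2 * n + 1) 2).mp e3.symm
      omega
end

section
/- For any Gallai coloring c of a complete graph G on at least 2 vertices, the vertex set of G can be partitioned into nonempty sets V_1, …, V_p with p > 1 such that: for each pair i ≠ j, all edges between V_i and V_j receive the same color under c, and the set of edges of G joining vertices in different parts uses at most two colors in total. -/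
universe u v

namespace GallaiAux

variable {V : Type u} {C : Type v}

def IsModule (c : V → V → C) (M : Finset V) : Prop :=
  ∀ u ∈ M, ∀ u' ∈ M, ∀ w, w ∉ M → c u w = c u' w

def GoodPart [Fintype V] (c : V → V → C) : Prop :=
  ∃ (p : ℕ) (P : Fin p → Finset V), 1 < p ∧
    (∀ i, (P i).Nonempty) ∧
    (∀ v : V, ∃! i, v ∈ P i) ∧
    (∀ i j : Fin p, i ≠ j →
      ∀ u ∈ P i, ∀ u' ∈ P i, ∀ v ∈ P j, ∀ v' ∈ P j, c u v = c u' v') ∧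
    (∃ c₁ c₂ : C, ∀ i j : Fin p, i ≠ j →
      ∀ u ∈ P i, ∀ v ∈ P j, c u v = c₁ ∨ c u v = c₂)

lemma good_of_two [Fintype V] [DecidableEq V] (hV : 2 ≤ Fintype.card V)
    (c : V → V → C) (c₁ c₂ : C) (h : ∀ u v : V, u ≠ v → c u v = c₁ ∨ c u v = c₂) :
    GoodPart c := by
  classical
  let e := (Fintype.equivFin V).symm
  refine ⟨Fintype.card V, fun i => {e i}, hV, fun i => ⟨e i, Finset.mem_singleton_self _⟩,
    ?_, ?_, c₁, c₂, ?_⟩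
  · intro w
    refine ⟨e.symm w, by simp, ?_⟩
    intro j hj
    rw [Finset.mem_singleton] at hj
    simp [hj]
  · intro i j _ u hu u' hu' w hw w' hw'
    rw [Finset.mem_singleton] at hu hu' hw hw'
    subst hu; subst hu'; subst hw; subst hw'; rfl
  · intro i j hij u hu w hw
    rw [Finset.mem_singleton] at hu hw
    subst hu; subst hw
    exact h _ _ (e.injective.ne hij)


lemma delta_module [Fintype V] [DecidableEq V] (c : V → V → C)
    (hsymm : ∀ u v : V, c u v = c v u)
    (nr : ∀ u v w : V, u ≠ v → u ≠ w → v ≠ w →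
      c u v = c u w ∨ c u v = c v w ∨ c u w = c v w)
    (x : V) (s t δ : C) (hst : s ≠ t) (hδs : δ ≠ s) (hδt : δ ≠ t)
    (hall : ∀ v : V, v ≠ x → c x v = s ∨ c x v = t)
    (y0 z0 : V) (hy0 : y0 ≠ x) (hz0 : z0 ≠ x) (hyz : y0 ≠ z0)
    (hy0s : c x y0 = s) (hz0s : c x z0 = s) (hyzδ : c y0 z0 = δ) :
    ∃ M : Finset V, 2 ≤ M.card ∧ x ∉ M ∧ IsModule c M := by
  classical
  set Rδ : V → V → Prop := fun a b => a ≠ x ∧ b ≠ x ∧ c x a = s ∧ c x b = s ∧ a ≠ b ∧ c a b = δ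
    with hRδ
  set M : Finset V := Finset.univ.filter (fun v => Relation.ReflTransGen Rδ y0 v) with hM
  have memM : ∀ v : V, v ∈ M ↔ Relation.ReflTransGen Rδ y0 v := by
    intro v; simp [hM]
  -- every element of M is ≠ x with x-color s
  have hprops : ∀ v : V, Relation.ReflTransGen Rδ y0 v → v ≠ x ∧ c x v = s := by
    intro v hv
    induction hv with
    | refl => exact ⟨hy0, hy0s⟩
    | tail _ hstep _ => exact ⟨hstep.2.1, hstep.2.2.2.1⟩
  have hy0M : y0 ∈ M := (memM y0).2 .refl
  have hz0M : z0 ∈ M := (memM z0).2 (Relation.ReflTransGen.single ⟨hy0, hz0, hy0s, hz0s, hyz, hyzδ⟩)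
  have hxM : x ∉ M := by
    intro hx
    exact (hprops x ((memM x).1 hx)).1 rfl
  refine ⟨M, Finset.one_lt_card.mpr ⟨y0, hy0M, z0, hz0M, hyz⟩, hxM, ?_⟩
  -- module property
  have key : ∀ w, w ∉ M → ∀ u, Relation.ReflTransGen Rδ y0 u → c u w = c y0 w := by
    intro w hw u hu
    induction hu with
    | refl => rfl
    | @tail a u ha hstep ih =>
      have haM : a ∈ M := (memM a).2 ha
      have huM : u ∈ M := (memM u).2 (ha.tail hstep)
      have hax : a ≠ x := hstep.1
      have hux : u ≠ x := hstep.2.1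
      have hcxa : c x a = s := hstep.2.2.1
      have hcxu : c x u = s := hstep.2.2.2.1
      have hau : a ≠ u := hstep.2.2.2.2.1
      have hcau : c a u = δ := hstep.2.2.2.2.2
      have haw : a ≠ w := fun h => hw (h ▸ haM)
      have huw : u ≠ w := fun h => hw (h ▸ huM)
      rw [← ih]
      -- show c u w = c a w
      by_cases hwx : w = x
      · subst hwx
        rw [hsymm u w, hsymm a w, hcxu, hcxa]
      · rcases hall w hwx with hws | hwt
        · -- w has x-color s; if c a w = δ or c u w = δ then w would be in M
          rcases nr a u w hau haw huw with h1 | h2 | h3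
          · -- c a u = c a w : δ = c a w  → w ∈ M
            exact absurd ((memM w).2 (ha.tail ⟨hax, hwx, hcxa, hws, haw, h1 ▸ hcau ▸ rfl⟩)) hw
          · exact absurd ((memM w).2 ((ha.tail hstep).tail
              ⟨hux, hwx, hcxu, hws, huw, by rw [← h2, hcau]⟩)) hw
          · exact h3.symm
        · -- w has x-color t
          have hcaw : c a w = s ∨ c a w = t := by
            rcases nr x a w (Ne.symm hax) (Ne.symm hwx) haw with h1 | h2 | h3
            · exact absurd (hcxa.symm.trans (h1.trans hwt)) hst
            · exact Or.inl (by rw [← h2, hcxa])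
            · exact Or.inr (by rw [← h3, hwt])
          have hcuw : c u w = s ∨ c u w = t := by
            rcases nr x u w (Ne.symm hux) (Ne.symm hwx) huw with h1 | h2 | h3
            · exact absurd (hcxu.symm.trans (h1.trans hwt)) hst
            · exact Or.inl (by rw [← h2, hcxu])
            · exact Or.inr (by rw [← h3, hwt])
          rcases nr a u w hau haw huw with h1 | h2 | h3
          · rw [hcau] at h1
            rcases hcaw with h | h <;> rw [h] at h1 <;> [exact absurd h1 hδs; exact absurd h1 hδt]
          · rw [hcau] at h2
            rcases hcuw with h | h <;> rw [h] at h2 <;> [exact absurd h2 hδs; exact absurd h2 hδt]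
          · exact h3.symm
  intro u hu u' hu' w hw
  rw [key w hw u ((memM u).1 hu), key w hw u' ((memM u').1 hu')]


lemma prime_core [Fintype V] [DecidableEq V] (c : V → V → C)
    (hsymm : ∀ u v : V, c u v = c v u)
    (nr : ∀ u v w : V, u ≠ v → u ≠ w → v ≠ w →
      c u v = c u w ∨ c u v = c v w ∨ c u w = c v w)
    (hV3 : 3 ≤ Fintype.card V)
    (x : V) (q : ℕ) (A : Fin q → Finset V) (hq : 1 < q)
    (hA : ∀ i, (A i).Nonempty)
    (hxA : ∀ i, x ∉ A i)
    (hcover : ∀ v : V, v ≠ x → ∃! i, v ∈ A i)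
    (hmono : ∀ i j : Fin q, i ≠ j →
      ∀ u ∈ A i, ∀ u' ∈ A i, ∀ w ∈ A j, ∀ w' ∈ A j, c u w = c u' w')
    (r b : C)
    (hcol : ∀ i j : Fin q, i ≠ j → ∀ u ∈ A i, ∀ w ∈ A j, c u w = r ∨ c u w = b)
    (hprime : ∀ M : Finset V, 2 ≤ M.card → M.card < Fintype.card V → ¬ IsModule c M) :
    ∃ c₁ c₂ : C, ∀ u v : V, u ≠ v → c u v = c₁ ∨ c u v = c₂ := by
  classical
  have cardlt : ∀ (M : Finset V) (w : V), w ∉ M → M.card < Fintype.card V := by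
    intro M w hw
    rw [← Finset.card_univ]
    exact Finset.card_lt_card ⟨Finset.subset_univ M, fun h => hw (h (Finset.mem_univ w))⟩
  have hmemx : ∀ (i : Fin q), ∀ v ∈ A i, v ≠ x := fun i v hv e => hxA i (e ▸ hv)
  have hpartuniq : ∀ (i j : Fin q) (v : V), v ∈ A i → v ∈ A j → i = j := by
    intro i j v hvi hvj
    obtain ⟨k, -, hk⟩ := hcover v (hmemx i v hvi)
    exact (hk i hvi).trans (hk j hvj).symm
  have hne_parts : ∀ {i j : Fin q} {a w : V}, i ≠ j → a ∈ A i → w ∈ A j → a ≠ w := by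
    intro i j a w hij ha hw e
    exact hij (hpartuniq i j a ha (e ▸ hw))
  by_cases hbig : ∃ i, 2 ≤ (A i).card
  · -- some part has ≥ 2 elements
    obtain ⟨i0, hi0card⟩ := hbig
    -- x is not monochromatic to A i0
    have hnotmono : ∃ a ∈ A i0, ∃ bb ∈ A i0, c x a ≠ c x bb := by
      by_contra hcon
      push_neg at hcon
      refine hprime (A i0) hi0card (cardlt _ x (hxA i0)) ?_
      intro u hu u' hu' w hw
      by_cases hwx : w = x
      · subst hwx
        rw [hsymm u w, hsymm u' w]
        exact hcon u hu u' hu'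
      · obtain ⟨j, hj, -⟩ := hcover w hwx
        have hij : i0 ≠ j := fun e => hw (by rw [e]; exact hj)
        exact hmono i0 j hij u hu u' hu' w hj w hj
    obtain ⟨a0, ha0, b0, hb0, hab0⟩ := hnotmono
    have ha0x : a0 ≠ x := hmemx i0 a0 ha0
    have hb0x : b0 ≠ x := hmemx i0 b0 hb0
    -- Key triangle fact
    have F : ∀ a ∈ A i0, ∀ bb ∈ A i0, c x a ≠ c x bb → ∀ j, i0 ≠ j → ∀ w ∈ A j,
        c x w = c a w ∨ (c x a = c a w ∧ c x bb = c x w) ∨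
          (c x a = c x w ∧ c x bb = c a w) := by
      intro a ha bb hb hne j hj w hw
      have hbw : c bb w = c a w := hmono i0 j hj bb hb a ha w hw w hw
      have haw : a ≠ w := hne_parts hj ha hw
      have hbww : bb ≠ w := hne_parts hj hb hw
      have hax : a ≠ x := hmemx i0 a ha
      have hbx : bb ≠ x := hmemx i0 bb hb
      have hwx : w ≠ x := hmemx j w hw
      rcases nr x a w (Ne.symm hax) (Ne.symm hwx) haw with ha1 | ha2 | ha3
      · rcases nr x bb w (Ne.symm hbx) (Ne.symm hwx) hbww with hb1 | hb2 | hb3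
        · exact absurd (ha1.trans hb1.symm) hne
        · exact Or.inr (Or.inr ⟨ha1, hb2.trans hbw⟩)
        · exact Or.inl (hb3.trans hbw)
      · rcases nr x bb w (Ne.symm hbx) (Ne.symm hwx) hbww with hb1 | hb2 | hb3
        · exact Or.inr (Or.inl ⟨ha2, hb1⟩)
        · exact absurd (ha2.trans (hb2.trans hbw).symm) hne
        · exact Or.inl (hb3.trans hbw)
      · exact Or.inl ha3
    by_cases hH : ∀ w : V, w ≠ x → w ∉ A i0 → c x w = c a0 w
    · -- insert x (A i0) would be a module
      exfalso
      have hj1 : ∃ j1 : Fin q, j1 ≠ i0 := by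
        haveI : Nontrivial (Fin q) := Fin.nontrivial_iff_two_le.mpr hq
        exact exists_ne i0
      obtain ⟨j1, hj1⟩ := hj1
      obtain ⟨v1, hv1⟩ := hA j1
      have hv1M : v1 ∉ insert x (A i0) := by
        rw [Finset.mem_insert]
        rintro (e | hv1')
        · exact hmemx j1 v1 hv1 e
        · exact hj1 (hpartuniq j1 i0 v1 hv1 hv1')
      refine hprime (insert x (A i0)) ?_ (cardlt _ v1 hv1M) ?_
      · exact Finset.one_lt_card.mpr ⟨x, Finset.mem_insert_self _ _, a0,
          Finset.mem_insert_of_mem ha0, Ne.symm ha0x⟩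
      · intro u hu u' hu' w hw
        have hwx : w ≠ x := fun e => hw (by rw [e]; exact Finset.mem_insert_self _ _)
        have hwA : w ∉ A i0 := fun h => hw (Finset.mem_insert_of_mem h)
        obtain ⟨j, hj, -⟩ := hcover w hwx
        have hij : i0 ≠ j := fun e => hwA (by rw [e]; exact hj)
        have key : ∀ y ∈ insert x (A i0), c y w = c x w := by
          intro y hy
          rcases Finset.mem_insert.1 hy with rfl | hy'
          · rfl
          · rw [hmono i0 j hij y hy' a0 ha0 w hj w hj, ← hH w hwx hwA]
        rw [key u hu, key u' hu']
    · push_neg at hH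
      obtain ⟨v0, hv0x, hv0A, hv0ne⟩ := hH
      obtain ⟨j0, hj0, -⟩ := hcover v0 hv0x
      have hj0i0 : i0 ≠ j0 := fun e => hv0A (by rw [e]; exact hj0)
      -- α = cross color from A i0 to v0, β = c x v0
      have hαβ : c a0 v0 ≠ c x v0 := fun e => hv0ne e.symm
      -- find vertices of both x-colors in A i0
      have hex : ∃ aa ∈ A i0, ∃ bb ∈ A i0, c x aa = c a0 v0 ∧ c x bb = c x v0 := by
        rcases F a0 ha0 b0 hb0 hab0 j0 hj0i0 v0 hj0 with h | ⟨g1, g2⟩ | ⟨g1, g2⟩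
        · exact absurd h.symm hαβ
        · exact ⟨a0, ha0, b0, hb0, g1, g2⟩
        · exact ⟨b0, hb0, a0, ha0, g2, g1⟩
      obtain ⟨aα, haα, bβ, hbβ, hcaα, hcbβ⟩ := hex
      have haαbβ : c x aα ≠ c x bβ := by rw [hcaα, hcbβ]; exact hαβ
      have hav0 : c aα v0 = c a0 v0 := hmono i0 j0 hj0i0 aα haα a0 ha0 v0 hj0 v0 hj0
      -- every vertex of A i0 has x-color α or β
      have hall_i0 : ∀ u ∈ A i0, c x u = c a0 v0 ∨ c x u = c x v0 := by
        intro u hu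
        by_cases h : c x u = c x aα
        · exact Or.inl (h.trans hcaα)
        · rcases F aα haα u hu (fun e => h e.symm) j0 hj0i0 v0 hj0 with h1 | ⟨g1, g2⟩ | ⟨g1, g2⟩
          · exact absurd (h1.trans hav0).symm hαβ
          · exact Or.inr g2
          · exact absurd (hcaα.symm.trans g1).symm (fun e => hαβ e.symm)
      have hαrb : c a0 v0 = r ∨ c a0 v0 = b := hcol i0 j0 hj0i0 a0 ha0 v0 hj0
      by_cases hZ : ∀ w : V, w ≠ x → c x w = c a0 v0 ∨ c x w = c x v0
      · -- all x-colors are α or β : conclude two colors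
        refine ⟨c a0 v0, c x v0, ?_⟩
        have cross : ∀ u w : V, u ≠ x → w ≠ x → u ≠ w →
            c u w = c a0 v0 ∨ c u w = c x v0 := by
          intro u w hux hwx huw
          by_cases hsame : c x u = c x w
          · by_contra hcon
            push_neg at hcon
            rcases hZ u hux with hus | hut
            · obtain ⟨M, hM2, hMx, hMmod⟩ := delta_module c hsymm nr x (c a0 v0) (c x v0)
                (c u w) hαβ hcon.1 hcon.2 hZ u w hux hwx huw hus
                (hsame.symm.trans hus) rfl
              exact hprime M hM2 (cardlt M x hMx) hMmod
            · obtain ⟨M, hM2, hMx, hMmod⟩ := delta_module c hsymm nr x (c x v0) (c a0 v0)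
                (c u w) (Ne.symm hαβ) hcon.2 hcon.1
                (fun y hy => (hZ y hy).elim Or.inr Or.inl) u w hux hwx huw hut
                (hsame.symm.trans hut) rfl
              exact hprime M hM2 (cardlt M x hMx) hMmod
          · rcases nr x u w (Ne.symm hux) (Ne.symm hwx) huw with h1 | h2 | h3
            · exact absurd h1 hsame
            · rcases hZ u hux with h | h
              · exact Or.inl (h2.symm.trans h)
              · exact Or.inr (h2.symm.trans h)
            · rcases hZ w hwx with h | h
              · exact Or.inl (h3.symm.trans h)
              · exact Or.inr (h3.symm.trans h)
        intro u w huw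
        by_cases hux : u = x
        · subst hux; exact hZ w (Ne.symm huw)
        · by_cases hwx : w = x
          · subst hwx; rw [hsymm u w]; exact hZ u hux
          · exact cross u w hux hwx huw
      · -- a third x-color exists : build the β-parts module, contradiction
        exfalso
        push_neg at hZ
        obtain ⟨z, hzx, hzα, hzβ⟩ := hZ
        obtain ⟨jz, hjz, -⟩ := hcover z hzx
        have hjzi0 : i0 ≠ jz := by
          intro e
          exact (hall_i0 z (by rw [e]; exact hjz)).elim hzα hzβ
        -- c aα z = c x z
        have hcz : c aα z = c x z := by
          rcases F aα haα bβ hbβ haαbβ jz hjzi0 z hjz with h | ⟨g1, g2⟩ | ⟨g1, g2⟩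
          · exact h.symm
          · exact absurd (hcbβ.symm.trans g2).symm hzβ
          · exact absurd (hcaα.symm.trans g1).symm hzα
        have hγrb : c x z = r ∨ c x z = b := by
          have := hcol i0 jz hjzi0 aα haα z hjz
          rwa [hcz] at this
        -- no cross color equals β
        have hβcross : ∀ d : C, (d = r ∨ d = b) → d ≠ c x v0 := by
          intro d hd hdβ
          rcases hαrb with h1 | h1
          · have hγb : c x z = b := by
              rcases hγrb with h | h
              · exact absurd (h1.trans h.symm).symm hzα
              · exact h
            rcases hd with h3 | h3
            · exact hαβ (h1.trans (h3.symm.trans hdβ))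
            · exact hzβ (hγb.trans (h3.symm.trans hdβ))
          · have hγr : c x z = r := by
              rcases hγrb with h | h
              · exact h
              · exact absurd (h1.trans h.symm).symm hzα
            rcases hd with h3 | h3
            · exact hzβ (hγr.trans (h3.symm.trans hdβ))
            · exact hαβ (h1.trans (h3.symm.trans hdβ))
        -- the module : x together with all parts containing a β-vertex
        set Mb : Finset V := insert x (Finset.univ.filter
          (fun y => y ≠ x ∧ ∃ k, y ∈ A k ∧ ∃ w ∈ A k, c x w = c x v0)) with hMbdef
        have memMb : ∀ y : V, y ∈ Mb ↔
            y = x ∨ (y ≠ x ∧ ∃ k, y ∈ A k ∧ ∃ w ∈ A k, c x w = c x v0) := by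
          intro y; simp [hMbdef]
        have hxMb : x ∈ Mb := Finset.mem_insert_self _ _
        have hbβMb : bβ ∈ Mb := (memMb bβ).2 (Or.inr ⟨hmemx i0 bβ hbβ, i0, hbβ, bβ, hbβ, hcbβ⟩)
        -- A jz is β-free, so z ∉ Mb
        have hjzfree : ∀ w ∈ A jz, c x w ≠ c x v0 := by
          intro w hw
          have hcw : c aα w = c aα z := hmono i0 jz hjzi0 aα haα aα haα w hw z hjz
          rcases F aα haα bβ hbβ haαbβ jz hjzi0 w hw with h | ⟨g1, g2⟩ | ⟨g1, g2⟩
          · rw [h, hcw, hcz]; exact hzβ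
          · exact absurd ((((hcaα.symm.trans g1).trans hcw).trans hcz)).symm hzα
          · intro e
            exact hzβ ((((hcbβ.symm.trans g2).trans hcw).trans hcz)).symm
        have hzMb : z ∉ Mb := by
          rw [memMb]
          rintro (h | ⟨-, k, hzk, w, hwk, hwβ⟩)
          · exact hzx h
          · have hk : k = jz := hpartuniq k jz z hzk hjz
            exact hjzfree w (hk ▸ hwk) hwβ
        refine hprime Mb (Finset.one_lt_card.mpr ⟨x, hxMb, bβ, hbβMb,
          Ne.symm (hmemx i0 bβ hbβ)⟩) (cardlt Mb z hzMb) ?_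
        intro u hu u' hu' w hw
        have keyM : ∀ y ∈ Mb, c y w = c x w := by
          intro y hy
          rcases (memMb y).1 hy with rfl | ⟨hyx, k, hyk, w', hw'k, hw'β⟩
          · rfl
          · have hwx : w ≠ x := fun e => hw (by rw [e]; exact hxMb)
            obtain ⟨m, hm, -⟩ := hcover w hwx
            have hmfree : ∀ y' ∈ A m, c x y' ≠ c x v0 := by
              intro y' hy' hy'β
              exact hw ((memMb w).2 (Or.inr ⟨hwx, m, hm, y', hy', hy'β⟩))
            have hkm : k ≠ m := fun e => hmfree w' (by rw [← e]; exact hw'k) hw'β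
            have h1 : c y w = c w' w := hmono k m hkm y hyk w' hw'k w hm w hm
            have hcww : c w' w ≠ c x v0 := hβcross _ (hcol k m hkm w' hw'k w hm)
            have hcxw : c x w ≠ c x v0 := hmfree w hm
            have hw'x : w' ≠ x := hmemx k w' hw'k
            have hw'w : w' ≠ w := hne_parts hkm hw'k hm
            rcases nr x w' w (Ne.symm hw'x) (Ne.symm hwx) hw'w with t1 | t2 | t3
            · exact absurd (hw'β.symm.trans t1).symm hcxw
            · exact absurd (hw'β.symm.trans t2).symm hcww
            · rw [h1, ← t3]
        rw [keyM u hu, keyM u' hu']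
  · -- all parts are singletons
    push_neg at hbig
    have hsing : ∀ (i : Fin q), ∀ u ∈ A i, ∀ w ∈ A i, u = w := by
      intro i u hu w hw
      have := hbig i
      have h1 : (A i).card ≤ 1 := by omega
      exact Finset.card_le_one.1 h1 u hu w hw
    have hW2 : ∀ u w : V, u ≠ x → w ≠ x → u ≠ w → c u w = r ∨ c u w = b := by
      intro u w hux hwx huw
      obtain ⟨i, hi, -⟩ := hcover u hux
      obtain ⟨j, hj, -⟩ := hcover w hwx
      have hij : i ≠ j := by
        intro e
        exact huw (hsing j u (by rw [← e]; exact hi) w hj)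
      exact hcol i j hij u hi w hj
    by_cases hxc : ∀ w : V, w ≠ x → c x w = r ∨ c x w = b
    · refine ⟨r, b, ?_⟩
      intro u w huw
      by_cases hux : u = x
      · subst hux; exact hxc w (Ne.symm huw)
      · by_cases hwx : w = x
        · subst hwx; rw [hsymm u w]; exact hxc u hux
        · exact hW2 u w hux hwx huw
    · exfalso
      push_neg at hxc
      obtain ⟨v1, hv1x, hv1r, hv1b⟩ := hxc
      by_cases hAll : ∀ w : V, w ≠ x → c x w = c x v1
      · -- univ.erase x is a module
        refine hprime (Finset.univ.erase x) ?_ ?_ ?_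
        · rw [Finset.card_erase_of_mem (Finset.mem_univ x), Finset.card_univ]; omega
        · rw [Finset.card_erase_of_mem (Finset.mem_univ x), Finset.card_univ]; omega
        · intro u hu u' hu' w hw
          have hwx : w = x := by
            by_contra h
            exact hw (Finset.mem_erase.2 ⟨h, Finset.mem_univ w⟩)
          subst hwx
          rw [hsymm u w, hsymm u' w, hAll u (Finset.mem_erase.1 hu).1,
            hAll u' (Finset.mem_erase.1 hu').1]
      · push_neg at hAll
        obtain ⟨w0, hw0x, hw0g⟩ := hAll
        set Mg : Finset V := insert x (Finset.univ.filter
          (fun y => y ≠ x ∧ c x y = c x v1)) with hMgdef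
        have memMg : ∀ y : V, y ∈ Mg ↔ y = x ∨ (y ≠ x ∧ c x y = c x v1) := by
          intro y; simp [hMgdef]
        have hxMg : x ∈ Mg := Finset.mem_insert_self _ _
        have hv1Mg : v1 ∈ Mg := (memMg v1).2 (Or.inr ⟨hv1x, rfl⟩)
        have hw0Mg : w0 ∉ Mg := by
          rw [memMg]
          rintro (h | ⟨-, h⟩)
          · exact hw0x h
          · exact hw0g h
        refine hprime Mg (Finset.one_lt_card.mpr ⟨x, hxMg, v1, hv1Mg, Ne.symm hv1x⟩)
          (cardlt Mg w0 hw0Mg) ?_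
        intro u hu u' hu' w hw
        have hwx : w ≠ x := fun e => hw (by rw [e]; exact hxMg)
        have hwg : c x w ≠ c x v1 := by
          intro e
          exact hw ((memMg w).2 (Or.inr ⟨hwx, e⟩))
        have keyg : ∀ y ∈ Mg, c y w = c x w := by
          intro y hy
          rcases (memMg y).1 hy with rfl | ⟨hyx, hyg⟩
          · rfl
          · have hyw : y ≠ w := fun e => hw (e ▸ hy)
            have hyw2 : c y w = r ∨ c y w = b := hW2 y w hyx hwx hyw
            rcases nr x y w (Ne.symm hyx) (Ne.symm hwx) hyw with t1 | t2 | t3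
            · exact absurd (hyg.symm.trans t1).symm hwg
            · exfalso
              rcases hyw2 with h | h
              · exact hv1r (hyg.symm.trans (t2.trans h))
              · exact hv1b (hyg.symm.trans (t2.trans h))
            · exact t3.symm
        rw [keyg u hu, keyg u' hu']


theorem main (n : ℕ) : ∀ (V : Type u) (C : Type v) [Fintype V] [DecidableEq V]
    (c : V → V → C), Fintype.card V = n → 2 ≤ Fintype.card V →
    (∀ u v : V, c u v = c v u) →
    (∀ u v w : V, u ≠ v → u ≠ w → v ≠ w →
      c u v = c u w ∨ c u v = c v w ∨ c u w = c v w) →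
    GoodPart c := by
  induction n using Nat.strong_induction_on with
  | _ n ih =>
  intro V C _ _ c hcard hV2 hsymm nr
  classical
  by_cases hmod : ∃ M : Finset V, 2 ≤ M.card ∧ M.card < Fintype.card V ∧ IsModule c M
  · obtain ⟨M, hM2, hMlt, hMod⟩ := hmod
    obtain ⟨m0, hm0⟩ := Finset.card_pos.1 (by omega : 0 < M.card)
    set R : Finset V := insert m0 Mᶜ with hR
    have hm0R : m0 ∈ R := Finset.mem_insert_self _ _
    have hRcard : R.card = Fintype.card V - M.card + 1 := by
      rw [hR, Finset.card_insert_of_notMem (by simp [hm0]), Finset.card_compl]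
    have hR2 : 2 ≤ R.card := by rw [hRcard]; omega
    have hRlt : R.card < n := by rw [hRcard]; omega
    set cR : {y : V // y ∈ R} → {y : V // y ∈ R} → C := fun a b => c a b with hcR
    have hcardR : Fintype.card {y : V // y ∈ R} = R.card := Fintype.card_coe R
    have hgood := ih R.card hRlt {y : V // y ∈ R} C cR hcardR (hcardR ▸ hR2)
      (fun a b => hsymm a b)
      (fun a b d hab had hbd => nr a b d (Subtype.coe_injective.ne hab)
        (Subtype.coe_injective.ne had) (Subtype.coe_injective.ne hbd))
    obtain ⟨p, Q, hp, hQne, hQcov, hQmono, c₁, c₂, hQcol⟩ := hgood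
    have hρmem : ∀ v : V, (if v ∈ M then m0 else v) ∈ R := by
      intro v
      by_cases h : v ∈ M
      · simp [h, hR]
      · simp [h, hR]
    set ρ : V → {y : V // y ∈ R} := fun v => ⟨if v ∈ M then m0 else v, hρmem v⟩ with hρ
    have hρR : ∀ (a : {y : V // y ∈ R}), ρ (a : V) = a := by
      rintro ⟨a, ha⟩
      rcases Finset.mem_insert.1 ha with rfl | ha'
      · simp [hρ, hm0]
      · have h : a ∉ M := Finset.mem_compl.1 ha'
        simp [hρ, h]
    have hkey : ∀ u w : V, ρ u ≠ ρ w → c u w = c (ρ u : V) (ρ w : V) := by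
      intro u w hne
      by_cases hu : u ∈ M
      · have hw : w ∉ M := by
          intro hw
          exact hne (by simp [hρ, hu, hw])
        have h1 : c u w = c m0 w := hMod u hu m0 hm0 w hw
        simp only [hρ, hu, hw, if_pos, if_neg, not_false_iff]
        exact h1
      · by_cases hw : w ∈ M
        · have h1 : c w u = c m0 u := hMod w hw m0 hm0 u hu
          have h2 : c u w = c u m0 := by rw [hsymm u w, h1, hsymm m0 u]
          simp only [hρ, hu, hw, if_pos, if_neg, not_false_iff]
          exact h2
        · simp [hρ, hu, hw]
    set P : Fin p → Finset V := fun i => Finset.univ.filter (fun v => ρ v ∈ Q i) with hP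
    have memP : ∀ (i : Fin p) (v : V), v ∈ P i ↔ ρ v ∈ Q i := by
      intro i v; simp [hP]
    refine ⟨p, P, hp, ?_, ?_, ?_, c₁, c₂, ?_⟩
    · intro i
      obtain ⟨a, ha⟩ := hQne i
      exact ⟨a, (memP i a).2 (by rw [hρR a]; exact ha)⟩
    · intro v
      obtain ⟨i, hi, hiu⟩ := hQcov (ρ v)
      exact ⟨i, (memP i v).2 hi, fun j hj => hiu j ((memP j v).1 hj)⟩
    · intro i j hij u hu u' hu' w hw w' hw'
      rw [memP] at hu hu' hw hw'
      have h1 : ρ u ≠ ρ w := by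
        intro e
        obtain ⟨k, -, hk⟩ := hQcov (ρ u)
        exact hij ((hk i hu).trans (hk j (e ▸ hw)).symm)
      have h2 : ρ u' ≠ ρ w' := by
        intro e
        obtain ⟨k, -, hk⟩ := hQcov (ρ u')
        exact hij ((hk i hu').trans (hk j (e ▸ hw')).symm)
      rw [hkey u w h1, hkey u' w' h2]
      exact hQmono i j hij (ρ u) hu (ρ u') hu' (ρ w) hw (ρ w') hw'
    · intro i j hij u hu w hw
      rw [memP] at hu hw
      have h1 : ρ u ≠ ρ w := by
        intro e
        obtain ⟨k, -, hk⟩ := hQcov (ρ u)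
        exact hij ((hk i hu).trans (hk j (e ▸ hw)).symm)
      rw [hkey u w h1]
      exact hQcol i j hij (ρ u) hu (ρ w) hw
  · push_neg at hmod
    by_cases hV3 : 3 ≤ Fintype.card V
    · -- prime case with at least 3 vertices
      have hne : Nonempty V := Fintype.card_pos_iff.mp (by omega)
      obtain ⟨x⟩ := hne
      set W : Finset V := Finset.univ.erase x with hW
      have hWcard : W.card = Fintype.card V - 1 := by
        rw [hW, Finset.card_erase_of_mem (Finset.mem_univ x), Finset.card_univ]
      have hcardW : Fintype.card {y : V // y ∈ W} = Fintype.card V - 1 :=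
        (Fintype.card_coe W).trans hWcard
      set cW : {y : V // y ∈ W} → {y : V // y ∈ W} → C := fun a b => c a b with hcW
      have hgood := ih (Fintype.card V - 1) (by omega) {y : V // y ∈ W} C cW
        (by rw [hcardW]) (by rw [hcardW]; omega)
        (fun a b => hsymm a b)
        (fun a b d hab had hbd => nr a b d (Subtype.coe_injective.ne hab)
          (Subtype.coe_injective.ne had) (Subtype.coe_injective.ne hbd))
      obtain ⟨q, Qw, hq, hQne, hQcov, hQmono, r, b, hQcol⟩ := hgood
      set A : Fin q → Finset V := fun i => (Qw i).image Subtype.val with hA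
      have memA : ∀ (i : Fin q) (v : V), v ∈ A i ↔ ∃ h : v ∈ W, (⟨v, h⟩ : {y : V // y ∈ W}) ∈ Qw i := by
        intro i v
        simp only [hA, Finset.mem_image]
        constructor
        · rintro ⟨a, ha, rfl⟩
          exact ⟨a.2, by simpa using ha⟩
        · rintro ⟨h, ha⟩
          exact ⟨⟨v, h⟩, ha, rfl⟩
      have hmemW : ∀ v : V, v ≠ x → v ∈ W := by
        intro v hv
        rw [hW]; exact Finset.mem_erase.2 ⟨hv, Finset.mem_univ v⟩
      have hxA : ∀ i, x ∉ A i := by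
        intro i hx
        obtain ⟨h, -⟩ := (memA i x).1 hx
        exact (Finset.mem_erase.1 h).1 rfl
      have hAne : ∀ i, (A i).Nonempty := by
        intro i
        obtain ⟨a, ha⟩ := hQne i
        exact ⟨a, (memA i a).2 ⟨a.2, by simpa using ha⟩⟩
      have hcover : ∀ v : V, v ≠ x → ∃! i, v ∈ A i := by
        intro v hv
        obtain ⟨i, hi, hiu⟩ := hQcov ⟨v, hmemW v hv⟩
        refine ⟨i, (memA i v).2 ⟨hmemW v hv, hi⟩, ?_⟩
        intro j hj
        obtain ⟨h, hj'⟩ := (memA j v).1 hj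
        exact hiu j (by simpa using hj')
      have hmono : ∀ i j : Fin q, i ≠ j →
          ∀ u ∈ A i, ∀ u' ∈ A i, ∀ w ∈ A j, ∀ w' ∈ A j, c u w = c u' w' := by
        intro i j hij u hu u' hu' w hw w' hw'
        obtain ⟨h1, hu⟩ := (memA i u).1 hu
        obtain ⟨h2, hu'⟩ := (memA i u').1 hu'
        obtain ⟨h3, hw⟩ := (memA j w).1 hw
        obtain ⟨h4, hw'⟩ := (memA j w').1 hw'
        exact hQmono i j hij ⟨u, h1⟩ hu ⟨u', h2⟩ hu' ⟨w, h3⟩ hw ⟨w', h4⟩ hw'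
      have hcol : ∀ i j : Fin q, i ≠ j → ∀ u ∈ A i, ∀ w ∈ A j,
          c u w = r ∨ c u w = b := by
        intro i j hij u hu w hw
        obtain ⟨h1, hu⟩ := (memA i u).1 hu
        obtain ⟨h3, hw⟩ := (memA j w).1 hw
        exact hQcol i j hij ⟨u, h1⟩ hu ⟨w, h3⟩ hw
      have hprime : ∀ M : Finset V, 2 ≤ M.card → M.card < Fintype.card V →
          ¬ IsModule c M := fun M h1 h2 => hmod M h1 h2
      obtain ⟨c₁, c₂, h12⟩ := prime_core c hsymm nr hV3 x q A hq hAne hxA hcover hmono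
        r b hcol hprime
      exact good_of_two hV2 c c₁ c₂ h12
    · -- exactly two vertices
      have hcard2 : Fintype.card V = 2 := by omega
      obtain ⟨u0, v0, huv⟩ := Fintype.exists_pair_of_one_lt_card (show 1 < Fintype.card V by omega)
      have huniv : ({u0, v0} : Finset V) = Finset.univ := by
        apply Finset.eq_univ_of_card
        rw [Finset.card_pair huv, hcard2]
      have hmem : ∀ w : V, w = u0 ∨ w = v0 := by
        intro w
        have : w ∈ ({u0, v0} : Finset V) := huniv ▸ Finset.mem_univ w
        simpa using this
      refine good_of_two hV2 c (c u0 v0) (c u0 v0) ?_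
      intro u w huw
      rcases hmem u with rfl | rfl <;> rcases hmem w with rfl | rfl
      · exact absurd rfl huw
      · exact Or.inl rfl
      · exact Or.inl (hsymm u w)
      · exact absurd rfl huw


end GallaiAux

/-- **Gallai's structure theorem.** For any Gallai coloring `c` of a complete graph on a
finite vertex set `V` with at least 2 vertices, `V` can be partitioned into `p > 1`
nonempty parts `P 0, …, P (p-1)` such that all edges between any fixed pair of distinct
parts receive a single color, and at most two colors appear in total on edges joining
vertices in different parts. -/
theorem gallai_partition {V C : Type*} [Fintype V] [DecidableEq V]
    (hV : 2 ≤ Fintype.card V)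
    (c : V → V → C) (hsymm : IsSymmColoring c) (hgallai : ¬ HasRainbowTriangle c) :
    ∃ (p : ℕ) (P : Fin p → Finset V), 1 < p ∧
      (∀ i, (P i).Nonempty) ∧
      (∀ v : V, ∃! i, v ∈ P i) ∧
      (∀ i j : Fin p, i ≠ j →
        ∀ u ∈ P i, ∀ u' ∈ P i, ∀ v ∈ P j, ∀ v' ∈ P j, c u v = c u' v') ∧
      (∃ c₁ c₂ : C, ∀ i j : Fin p, i ≠ j →
        ∀ u ∈ P i, ∀ v ∈ P j, c u v = c₁ ∨ c u v = c₂) := by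
  have nr : ∀ u v w : V, u ≠ v → u ≠ w → v ≠ w →
      c u v = c u w ∨ c u v = c v w ∨ c u w = c v w := by
    intro u v w h1 h2 h3
    by_contra hcon
    push_neg at hcon
    exact hgallai ⟨u, v, w, h1, h2, h3, hcon.1, hcon.2.1, hcon.2.2⟩
  obtain ⟨p, P, h1, h2, h3, h4, h5⟩ :=
    GallaiAux.main (Fintype.card V) V C c rfl hV hsymm nr
  exact ⟨p, P, h1, h2, h3, h4, h5⟩
end

section
/- For all integers ℓ ≥ 3 and n ≥ 1, let n_1, n_2, …, n_ℓ be positive integers such that n_i ≤ n for all i ∈ {1,…,ℓ} and n_1 + n_2 + ⋯ + n_ℓ ≥ 2n + 1. Then the complete multipartite graph K_{n_1, n_2, …, n_ℓ} contains a cycle of length 2n+1. -/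
/-- For all integers `ℓ ≥ 3` and `n ≥ 1`, if `n_1, …, n_ℓ` are positive integers with
`n_i ≤ n` for all `i` and `n_1 + ⋯ + n_ℓ ≥ 2n + 1`, then the complete multipartite
graph `K_{n_1, …, n_ℓ}` (vertices are pairs `⟨i, x⟩` with `x : Fin (n_i)`, two vertices
adjacent iff they lie in different parts) contains a cycle of length `2n+1`. -/
theorem complete_multipartite_odd_cycle (ℓ n : ℕ) (hl : 3 ≤ ℓ) (hn : 1 ≤ n)
    (f : Fin ℓ → ℕ) (hpos : ∀ i, 1 ≤ f i) (hle : ∀ i, f i ≤ n)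
    (hsum : 2 * n + 1 ≤ ∑ i, f i) :
    ∃ g : ZMod (2 * n + 1) → Σ i : Fin ℓ, Fin (f i),
      Function.Injective g ∧ ∀ j : ZMod (2 * n + 1), (g j).1 ≠ (g (j + 1)).1 := by
  haveI : NeZero (2 * n + 1) := ⟨by omega⟩
  set N := 2 * n + 1 with hN
  set off : Fin ℓ → ℕ := fun i => ∑ k ∈ Finset.Iio i, f k with hoff
  have hoff_le : ∀ i : Fin ℓ, off i + f i ≤ ∑ k, f k := by
    intro i
    have h1 : off i + f i = ∑ k ∈ Finset.Iic i, f k := by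
      rw [hoff, ← Finset.sum_Iio_add_eq_sum_Iic]
    rw [h1]
    exact Finset.sum_le_sum_of_subset (Finset.subset_univ _)
  have hoff_mono : ∀ i j : Fin ℓ, i < j → off i + f i ≤ off j := by
    intro i j hij
    have h1 : off i + f i = ∑ k ∈ Finset.Iic i, f k := by
      rw [hoff, ← Finset.sum_Iio_add_eq_sum_Iic]
    rw [h1, hoff]
    exact Finset.sum_le_sum_of_subset (fun k hk => by
      simp only [Finset.mem_Iic, Finset.mem_Iio] at *; omega)
  set idx : (Σ i : Fin ℓ, Fin (f i)) → ℕ := fun v => off v.1 + v.2.1 with hidx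
  have hidx_lt : ∀ v, idx v < ∑ k, f k := fun v => by
    have := hoff_le v.1; have := v.2.2; simp only [hidx]; omega
  have hidx_inj : Function.Injective idx := by
    intro ⟨i, x⟩ ⟨j, y⟩ h
    simp only [hidx] at h
    rcases lt_trichotomy i j with hij | hij | hij
    · have := hoff_mono i j hij; have := x.2; omega
    · subst hij; have : x = y := Fin.ext (by omega); rw [this]
    · have := hoff_mono j i hij; have := y.2; omega
  have hbij : Function.Bijective (fun v => (⟨idx v, hidx_lt v⟩ : Fin (∑ k, f k))) := by
    rw [Fintype.bijective_iff_injective_and_card]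
    constructor
    · intro a b h
      exact hidx_inj (congrArg Fin.val h)
    · simp
  set e := Equiv.ofBijective _ hbij with he
  have key : ∀ (t : ℕ) (ht : t < ∑ k, f k), idx (e.symm ⟨t, ht⟩) = t := by
    intro t ht
    have h1 := Equiv.apply_symm_apply e ⟨t, ht⟩
    exact congrArg Fin.val h1
  have hval_lt : ∀ j : ZMod N, (((n + 1 : ℕ) : ZMod N) * j).val < ∑ k, f k := by
    intro j; have := ZMod.val_lt (((n + 1 : ℕ) : ZMod N) * j); omega
  refine ⟨fun j => e.symm ⟨(((n + 1 : ℕ) : ZMod N) * j).val, hval_lt j⟩, ?_, ?_⟩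
  · intro j1 j2 h
    have h2 := e.symm.injective h
    have h3 : ((n + 1 : ℕ) : ZMod N) * j1 = ((n + 1 : ℕ) : ZMod N) * j2 := by
      apply ZMod.val_injective
      injection h2
    have h4 : ((2 : ℕ) : ZMod N) * ((n + 1 : ℕ) : ZMod N) = 1 := by
      rw [← Nat.cast_mul]
      have h5 : (2 * (n + 1)) = N + 1 := by omega
      rw [h5]; push_cast [ZMod.natCast_self]; ring
    calc j1 = ((2:ℕ) : ZMod N) * ((n+1:ℕ) : ZMod N) * j1 := by rw [h4, one_mul]
    _ = ((2:ℕ) : ZMod N) * (((n+1:ℕ) : ZMod N) * j2) := by rw [mul_assoc, h3]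
    _ = j2 := by rw [← mul_assoc, h4, one_mul]
  · intro j hcontra
    simp only at hcontra
    set a := (((n + 1 : ℕ) : ZMod N) * j).val with ha
    set b := (((n + 1 : ℕ) : ZMod N) * (j + 1)).val with hb
    have h5 : ((n + 1 : ℕ) : ZMod N).val = n + 1 := by
      rw [ZMod.val_natCast]; exact Nat.mod_eq_of_lt (by omega)
    have hab : b = (a + (n + 1)) % N := by
      rw [hb, mul_add, mul_one, ZMod.val_add, h5]
    have haN : a < N := ZMod.val_lt _
    have hbN : b < N := ZMod.val_lt _
    set v := e.symm ⟨a, hval_lt j⟩ with hv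
    set w := e.symm ⟨b, hval_lt (j + 1)⟩ with hw
    have hva : off v.1 + v.2.1 = a := key a _
    have hwb : off w.1 + w.2.1 = b := key b _
    have hsame : off w.1 = off v.1 := by rw [congrArg off hcontra]
    have hx : v.2.1 < f v.1 := v.2.2
    have hy : w.2.1 < f w.1 := w.2.2
    have hff : f v.1 = f w.1 := congrArg f hcontra
    have hfn : f v.1 ≤ n := hle v.1
    have hab' : b = a + (n + 1) ∨ b + N = a + (n + 1) := by
      rcases Nat.lt_or_ge (a + (n + 1)) N with h | h
      · left; rw [hab, Nat.mod_eq_of_lt h]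
      · right
        rw [hab, Nat.mod_eq_sub_mod h, Nat.mod_eq_of_lt (by omega)]
        omega
    omega
end

section
/- Let n ≥ 2 and let c be an edge-coloring of a complete graph G that contains no monochromatic cycle on 2n+1 vertices in color b (for some fixed color b). Let Y, Z ⊆ V(G) be disjoint sets with |Y| ≥ n and |Z| ≥ n such that every edge between Y and Z receives color b. Then: (1) no vertex of V(G) \ (Y ∪ Z) has all of its edges to Y ∪ Z colored b; (2) if |Z| ≥ n+1, then no edge with both endpoints in Z receives color b; and (3) if |Y| ≥ n+1, then no edge with both endpoints in Y receives color b. -/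
lemma key_cycle {V C : Type*} (c : V → V → C) (b : C) (n : ℕ) (hn : 1 ≤ n)
    (v : V) (A B : ℕ → V)
    (hAinj : ∀ i < n, ∀ j < n, A i = A j → i = j)
    (hBinj : ∀ i < n, ∀ j < n, B i = B j → i = j)
    (hAB : ∀ i < n, ∀ j < n, A i ≠ B j)
    (hvA : ∀ i < n, v ≠ A i) (hvB : ∀ i < n, v ≠ B i)
    (h0 : c v (A 0) = b)
    (hABe : ∀ i < n, c (A i) (B i) = b)
    (hBAe : ∀ i, i + 1 < n → c (B i) (A (i+1)) = b)
    (hlast : c (B (n-1)) v = b) :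
    HasMonoCycleColor c (2*n+1) b := by
  haveI : NeZero (2*n+1) := ⟨by omega⟩
  have hm1 : 1 < 2*n+1 := by omega
  set g : ℕ → V := fun j => if j = 0 then v else if j % 2 = 1 then A (j/2) else B (j/2 - 1)
    with hg
  have g0 : g 0 = v := by simp [hg]
  have gA : ∀ i, g (2*i+1) = A i := by
    intro i
    simp only [hg]
    rw [if_neg (by omega), if_pos (by omega)]
    congr 1; omega
  have gB : ∀ i, g (2*i+2) = B i := by
    intro i
    simp only [hg]
    rw [if_neg (by omega), if_neg (by omega)]
    congr 1; omega
  have decomp : ∀ j, j < 2*n+1 → j = 0 ∨ (∃ i, i < n ∧ j = 2*i+1) ∨ (∃ i, i < n ∧ j = 2*i+2) := by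
    intro j hj
    rcases Nat.even_or_odd j with he | ho
    · rw [Nat.even_iff] at he
      rcases Nat.eq_zero_or_pos j with h0' | hp
      · exact Or.inl h0'
      · exact Or.inr (Or.inr ⟨j/2 - 1, by omega, by omega⟩)
    · rw [Nat.odd_iff] at ho
      exact Or.inr (Or.inl ⟨j/2, by omega, by omega⟩)
  have ginj : ∀ j1 < 2*n+1, ∀ j2 < 2*n+1, g j1 = g j2 → j1 = j2 := by
    intro j1 hj1 j2 hj2 h
    rcases decomp j1 hj1 with rfl | ⟨i1, hi1, rfl⟩ | ⟨i1, hi1, rfl⟩ <;>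
      rcases decomp j2 hj2 with rfl | ⟨i2, hi2, rfl⟩ | ⟨i2, hi2, rfl⟩
    · rfl
    · rw [g0, gA] at h; exact absurd h (hvA i2 hi2)
    · rw [g0, gB] at h; exact absurd h (hvB i2 hi2)
    · rw [g0, gA] at h; exact absurd h.symm (hvA i1 hi1)
    · rw [gA, gA] at h; have := hAinj i1 hi1 i2 hi2 h; omega
    · rw [gA, gB] at h; exact absurd h (hAB i1 hi1 i2 hi2)
    · rw [g0, gB] at h; exact absurd h.symm (hvB i1 hi1)
    · rw [gA, gB] at h; exact absurd h.symm (hAB i2 hi2 i1 hi1)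
    · rw [gB, gB] at h; have := hBinj i1 hi1 i2 hi2 h; omega
  refine ⟨fun k => g k.val, ?_, ?_⟩
  · intro k l h
    exact ZMod.val_injective (2*n+1) (ginj k.val k.val_lt l.val l.val_lt h)
  · intro k
    have hk1 : (k + 1).val = (k.val + 1) % (2*n+1) := by
      rw [ZMod.val_add, ZMod.val_one_eq_one_mod, Nat.mod_eq_of_lt hm1]
    show c (g k.val) (g ((k+1).val)) = b
    rw [hk1]
    rcases decomp k.val k.val_lt with h' | ⟨i, hi, h'⟩ | ⟨i, hi, h'⟩ <;> rw [h']
    · rw [g0, show (0 + 1) % (2*n+1) = 2*0+1 by rw [Nat.mod_eq_of_lt (by omega)], gA]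
      exact h0
    · rw [show (2*i+1 + 1) % (2*n+1) = 2*i+2 by rw [Nat.mod_eq_of_lt (by omega)], gA, gB]
      exact hABe i hi
    · rcases Nat.lt_or_ge (i+1) n with hlt | hge
      · rw [show (2*i+2 + 1) % (2*n+1) = 2*(i+1)+1 by rw [Nat.mod_eq_of_lt (by omega)]; omega, gB, gA]
        exact hBAe i hlt
      · have : i = n - 1 := by omega
        subst this
        rw [show (2*(n-1)+2 + 1) % (2*n+1) = 0 by rw [show 2*(n-1)+2+1 = 2*n+1 by omega, Nat.mod_self], gB, g0]
        exact hlast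

lemma finset_fun {V : Type*} [DecidableEq V] (S : Finset V) (n : ℕ) (hn : n ≤ S.card)
    (hpos : 0 < n) :
    ∃ g : ℕ → V, (∀ i < n, g i ∈ S) ∧ (∀ i < n, ∀ j < n, g i = g j → i = j) := by
  obtain ⟨T, hTS, hTcard⟩ := Finset.exists_subset_card_eq hn
  obtain ⟨x, hx⟩ : S.Nonempty := Finset.card_pos.mp (by omega)
  let e := Finset.equivFinOfCardEq hTcard
  refine ⟨fun i => if h : i < n then (e.symm ⟨i, h⟩ : V) else x, ?_, ?_⟩
  · intro i hi
    dsimp only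
    rw [dif_pos hi]
    exact hTS (e.symm ⟨i, hi⟩).2
  · intro i hi j hj h
    dsimp only at h
    rw [dif_pos hi, dif_pos hj] at h
    have := e.symm.injective (Subtype.ext h)
    exact congrArg Fin.val this

/-- Let `n ≥ 2` and let `c` be a symmetric edge-coloring of a complete graph with no
monochromatic cycle on `2n+1` vertices in color `b`.  If `Y` and `Z` are disjoint sets
with `|Y| ≥ n` and `|Z| ≥ n` such that all edges between `Y` and `Z` receive color `b`,
then: (1) no vertex outside `Y ∪ Z` has all its edges to `Y ∪ Z` colored `b`;
(2) if `|Z| ≥ n+1`, no edge inside `Z` has color `b`; and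
(3) if `|Y| ≥ n+1`, no edge inside `Y` has color `b`. -/
theorem mc_complete_sets_no_mono_odd_cycle {V C : Type*} [DecidableEq V]
    (n : ℕ) (hn : 2 ≤ n)
    (c : V → V → C) (hsymm : IsSymmColoring c) (b : C)
    (hnocycle : ¬ HasMonoCycleColor c (2 * n + 1) b)
    (Y Z : Finset V) (hdisj : Disjoint Y Z)
    (hY : n ≤ Y.card) (hZ : n ≤ Z.card)
    (hcomplete : ∀ y ∈ Y, ∀ z ∈ Z, c y z = b) :
    (∀ v : V, v ∉ Y ∪ Z → ¬ (∀ w ∈ Y ∪ Z, c v w = b)) ∧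
    (n + 1 ≤ Z.card → ∀ z ∈ Z, ∀ z' ∈ Z, z ≠ z' → c z z' ≠ b) ∧
    (n + 1 ≤ Y.card → ∀ y ∈ Y, ∀ y' ∈ Y, y ≠ y' → c y y' ≠ b) := by
  obtain ⟨gY, hgYmem, hgYinj⟩ := finset_fun Y n hY (by omega)
  obtain ⟨gZ, hgZmem, hgZinj⟩ := finset_fun Z n hZ (by omega)
  have hne : ∀ y ∈ Y, ∀ z ∈ Z, y ≠ z := by
    intro y hy z hz h
    exact (Finset.disjoint_left.mp hdisj hy) (h ▸ hz)
  refine ⟨?_, ?_, ?_⟩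
  · -- Part 1
    intro v hv hall
    apply hnocycle
    refine key_cycle c b n (by omega) v gY gZ hgYinj hgZinj
      (fun i hi j hj => hne _ (hgYmem i hi) _ (hgZmem j hj)) ?_ ?_ ?_ ?_ ?_ ?_
    · intro i hi h
      exact hv (h ▸ Finset.mem_union_left Z (hgYmem i hi))
    · intro i hi h
      exact hv (h ▸ Finset.mem_union_right Y (hgZmem i hi))
    · exact hall _ (Finset.mem_union_left Z (hgYmem 0 (by omega)))
    · exact fun i hi => hcomplete _ (hgYmem i hi) _ (hgZmem i hi)
    · intro i hi
      rw [hsymm]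
      exact hcomplete _ (hgYmem (i+1) hi) _ (hgZmem i (by omega))
    · rw [hsymm]
      exact hall _ (Finset.mem_union_right Y (hgZmem (n-1) (by omega)))
  · -- Part 2: no b-edge inside Z when |Z| ≥ n+1
    intro hZ1 z hz z' hz' hzz' hb
    apply hnocycle
    obtain ⟨gW, hgWmem, hgWinj⟩ := finset_fun ((Z.erase z).erase z') (n-1)
      (by
        have h1 : z ∈ Z := hz
        have := Finset.card_erase_of_mem hz
        have hz'e : z' ∈ Z.erase z := Finset.mem_erase.mpr ⟨Ne.symm hzz', hz'⟩
        have := Finset.card_erase_of_mem hz'e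
        omega) (by omega)
    set A : ℕ → V := fun i => if i = 0 then z' else gW (i-1) with hA
    have hAmem : ∀ i < n, A i ∈ Z := by
      intro i hi
      simp only [hA]
      split
      · exact hz'
      · exact Finset.mem_of_mem_erase (Finset.mem_of_mem_erase (hgWmem (i-1) (by omega)))
    have hAnotz : ∀ i < n, A i ≠ z := by
      intro i hi
      simp only [hA]
      split
      · exact Ne.symm hzz'
      · intro h
        rename_i h0
        have := hgWmem (i-1) (by omega)
        rw [h] at this
        exact (Finset.mem_erase.mp (Finset.mem_of_mem_erase this)).1 rfl
    have hAinj : ∀ i < n, ∀ j < n, A i = A j → i = j := by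
      intro i hi j hj h
      simp only [hA] at h
      split at h <;> split at h
      · omega
      · exact absurd h.symm (Finset.mem_erase.mp (hgWmem (j-1) (by omega))).1
      · exact absurd h (Finset.mem_erase.mp (hgWmem (i-1) (by omega))).1
      · have := hgWinj (i-1) (by omega) (j-1) (by omega) h
        omega
    refine key_cycle c b n (by omega) z A gY hAinj hgYinj
      (fun i hi j hj h => hne _ (hgYmem j hj) _ (hAmem i hi) h.symm) ?_ ?_ ?_ ?_ ?_ ?_
    · exact fun i hi h => hAnotz i hi h.symm
    · exact fun i hi h => hne _ (hgYmem i hi) _ hz h.symm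
    · simpa [hA] using hb
    · intro i hi
      rw [hsymm]
      exact hcomplete _ (hgYmem i hi) _ (hAmem i hi)
    · exact fun i hi => hcomplete _ (hgYmem i (by omega)) _ (hAmem (i+1) (by omega))
    · exact hcomplete _ (hgYmem (n-1) (by omega)) _ hz
  · -- Part 3: no b-edge inside Y when |Y| ≥ n+1
    intro hY1 y hy y' hy' hyy' hb
    apply hnocycle
    obtain ⟨gW, hgWmem, hgWinj⟩ := finset_fun ((Y.erase y).erase y') (n-1)
      (by
        have := Finset.card_erase_of_mem hy
        have hy'e : y' ∈ Y.erase y := Finset.mem_erase.mpr ⟨Ne.symm hyy', hy'⟩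
        have := Finset.card_erase_of_mem hy'e
        omega) (by omega)
    set A : ℕ → V := fun i => if i = 0 then y' else gW (i-1) with hA
    have hAmem : ∀ i < n, A i ∈ Y := by
      intro i hi
      simp only [hA]
      split
      · exact hy'
      · exact Finset.mem_of_mem_erase (Finset.mem_of_mem_erase (hgWmem (i-1) (by omega)))
    have hAnoty : ∀ i < n, A i ≠ y := by
      intro i hi
      simp only [hA]
      split
      · exact Ne.symm hyy'
      · intro h
        have := hgWmem (i-1) (by omega)
        rw [h] at this
        exact (Finset.mem_erase.mp (Finset.mem_of_mem_erase this)).1 rfl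
    have hAinj : ∀ i < n, ∀ j < n, A i = A j → i = j := by
      intro i hi j hj h
      simp only [hA] at h
      split at h <;> split at h
      · omega
      · exact absurd h.symm (Finset.mem_erase.mp (hgWmem (j-1) (by omega))).1
      · exact absurd h (Finset.mem_erase.mp (hgWmem (i-1) (by omega))).1
      · have := hgWinj (i-1) (by omega) (j-1) (by omega) h
        omega
    refine key_cycle c b n (by omega) y A gZ hAinj hgZinj
      (fun i hi j hj => hne _ (hAmem i hi) _ (hgZmem j hj)) ?_ ?_ ?_ ?_ ?_ ?_
    · exact fun i hi h => hAnoty i hi h.symm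
    · exact fun i hi h => hne _ hy _ (hgZmem i hi) h
    · simpa [hA] using hb
    · exact fun i hi => hcomplete _ (hAmem i hi) _ (hgZmem i hi)
    · intro i hi
      rw [hsymm]
      exact hcomplete _ (hAmem (i+1) hi) _ (hgZmem i (by omega))
    · rw [hsymm]
      exact hcomplete _ hy _ (hgZmem (n-1) (by omega))
end
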